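/- Let A be a finite set, u : A → [0,∞), γ ∈ (0,1], and v^T_γ = max over all histories of length T of U^T_γ. Then the sequence (v^T_γ)_{T≥1} converges as T → ∞. -/

import Mathlib

open Finset Filter

/-- Empirical frequency of action `b` in the first `t` periods of history `a`. -/
noncomputable def freq {A : Type*} [DecidableEq A] (a : ℕ → A) (b : A) (t : ℕ) : ℝ :=
  if t = 0 then 0 else (∑ s ∈ Finset.Icc 1 t, if a s = b then (1 : ℝ) else 0) / t

/-- Average fatigued payoff of history `a` over the first `T` periods. -/
noncomputable def avgU {A : Type*} [DecidableEq A] (u : A → ℝ) (γ : ℝ) (a : ℕ → A)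
    (T : ℕ) : ℝ :=
  (∑ t ∈ Finset.Icc 1 T, (1 - γ * freq a (a t) (t - 1)) * u (a t)) / T

/-- `v^T_γ`: the best average payoff achievable in `T` periods (as `avgU` only
depends on the first `T` actions, the supremum over infinite histories is a
maximum over histories of length `T`). -/
noncomputable def vT {A : Type*} [DecidableEq A] (u : A → ℝ) (γ : ℝ) (T : ℕ) : ℝ :=
  ⨆ a : ℕ → A, avgU u γ a T

section aux
variable {A : Type*} [DecidableEq A]

/-- count of `b` among `a 1, ..., a t`. -/
noncomputable def cnt (a : ℕ → A) (b : A) (t : ℕ) : ℝ :=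
  ∑ s ∈ Finset.Icc 1 t, if a s = b then (1 : ℝ) else 0

lemma cnt_nonneg (a : ℕ → A) (b : A) (t : ℕ) : 0 ≤ cnt a b t :=
  Finset.sum_nonneg fun s _ => by positivity

lemma cnt_le (a : ℕ → A) (b : A) (t : ℕ) : cnt a b t ≤ t := by
  calc cnt a b t ≤ ∑ s ∈ Finset.Icc 1 t, (1:ℝ) :=
        Finset.sum_le_sum fun s _ => by split <;> norm_num
    _ = t := by simp [Nat.card_Icc]

lemma freq_eq (a : ℕ → A) (b : A) {t : ℕ} (ht : t ≠ 0) : freq a b t = cnt a b t / t :=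
  if_neg ht

lemma freq_nonneg (a : ℕ → A) (b : A) (t : ℕ) : 0 ≤ freq a b t := by
  unfold freq
  split
  · exact le_refl _
  · exact div_nonneg (cnt_nonneg a b t) (Nat.cast_nonneg t)

lemma freq_le_one (a : ℕ → A) (b : A) (t : ℕ) : freq a b t ≤ 1 := by
  unfold freq
  split
  · norm_num
  · rename_i ht
    rw [div_le_one (by exact_mod_cast Nat.pos_of_ne_zero ht)]
    exact cnt_le a b t

end aux

section blocks

lemma div_in_block {k T : ℕ} (hk : 0 < k) {s : ℕ} (h1 : T * k < s) (h2 : s ≤ T * k + k) :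
    (s + k - 1) / k = T + 1 := by
  have e1 : (T + 1) * k = T * k + k := by ring
  have e2 : (T + 1 + 1) * k = T * k + k + k := by ring
  apply Nat.div_eq_of_lt_le <;> omega

lemma sum_blocks (g : ℕ → ℝ) {k : ℕ} (hk : 0 < k) (T : ℕ) :
    ∑ s ∈ Finset.Ioc 0 (T * k), g ((s + k - 1) / k) = k * ∑ t ∈ Finset.Ioc 0 T, g t := by
  induction T with
  | zero => simp
  | succ T ih =>
    rw [show (T + 1) * k = T * k + k from by ring]
    have h1 : (0:ℕ) ≤ T * k := Nat.zero_le _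
    have h2 : T * k ≤ T * k + k := by omega
    rw [← Finset.sum_Ioc_consecutive _ h1 h2, ih]
    have : ∑ s ∈ Finset.Ioc (T * k) (T * k + k), g ((s + k - 1) / k)
        = ∑ s ∈ Finset.Ioc (T * k) (T * k + k), g (T + 1) := by
      apply Finset.sum_congr rfl
      intro s hs
      rw [Finset.mem_Ioc] at hs
      rw [div_in_block hk hs.1 (by omega)]
    rw [this, Finset.sum_const, Nat.card_Ioc]
    have hcard : T * k + k - T * k = k := by omega
    rw [hcard, ← Finset.sum_Ioc_consecutive g (Nat.zero_le T) (by omega : T ≤ T + 1)]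
    have : ∑ t ∈ Finset.Ioc T (T + 1), g t = g (T + 1) := by
      rw [show Finset.Ioc T (T+1) = {T+1} by rw [Nat.Ioc_succ_singleton], Finset.sum_singleton]
    rw [this, nsmul_eq_mul]
    push_cast
    ring

lemma sum_partial (g : ℕ → ℝ) {k : ℕ} (hk : 0 < k) (t m : ℕ) (hm : m < k) :
    ∑ s ∈ Finset.Ioc (t * k) (t * k + m), g ((s + k - 1) / k) = m * g (t + 1) := by
  have : ∑ s ∈ Finset.Ioc (t * k) (t * k + m), g ((s + k - 1) / k)
      = ∑ s ∈ Finset.Ioc (t * k) (t * k + m), g (t + 1) := by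
    apply Finset.sum_congr rfl
    intro s hs
    rw [Finset.mem_Ioc] at hs
    rw [div_in_block hk hs.1 (by omega)]
  rw [this, Finset.sum_const, Nat.card_Ioc, Nat.add_sub_cancel_left, nsmul_eq_mul]

end blocks

section stretch
variable {A : Type*} [DecidableEq A]

lemma cnt_stretch (a : ℕ → A) {k : ℕ} (hk : 0 < k) (v : A) (q m : ℕ) (hm : m < k) :
    cnt (fun s => a ((s + k - 1) / k)) v (q * k + m)
      = k * cnt a v q + m * (if a (q + 1) = v then 1 else 0) := by
  unfold cnt
  rw [show Finset.Icc 1 (q * k + m) = Finset.Ioc 0 (q * k + m) from by rw [← Finset.Icc_add_one_left_eq_Ioc]; rfl,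
      show Finset.Icc 1 q = Finset.Ioc 0 q from by rw [← Finset.Icc_add_one_left_eq_Ioc]; rfl]
  rw [← Finset.sum_Ioc_consecutive _ (Nat.zero_le _) (Nat.le_add_right _ _)]
  rw [sum_blocks (fun s => if a s = v then (1:ℝ) else 0) hk q,
      sum_partial (fun s => if a s = v then (1:ℝ) else 0) hk q m hm]

lemma freq_stretch_le (a : ℕ → A) {k : ℕ} (hk : 0 < k) (n : ℕ) :
    freq (fun s => a ((s + k - 1) / k)) (a (n / k + 1)) n
      ≤ freq a (a (n / k + 1)) (n / k) + 2 / ((n / k : ℕ) + 1 : ℝ) := by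
  rcases Nat.eq_zero_or_pos n with hn | hn
  · subst hn
    simp [freq]
  rcases Nat.eq_zero_or_pos (n / k) with hq | hq
  · rw [hq]
    have h2 : freq a (a (0 + 1)) 0 = 0 := by simp [freq]
    rw [h2]
    refine le_trans (freq_le_one _ _ _) ?_
    norm_num
  · set q := n / k with hqdef
    set m := n % k with hmdef
    have hm : m < k := Nat.mod_lt _ hk
    have hnq : n = q * k + m := (Nat.div_add_mod' n k).symm
    have hc : cnt a (a (q + 1)) q ≤ q := cnt_le _ _ _
    have hc0 : 0 ≤ cnt a (a (q + 1)) q := cnt_nonneg _ _ _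
    rw [freq_eq _ _ (show n ≠ 0 by omega), freq_eq _ _ (show q ≠ 0 by omega)]
    rw [show n = q * k + m from hnq, cnt_stretch a hk _ q m hm, if_pos rfl]
    set c := cnt a (a (q + 1)) q with hcdef
    have hnpos : (0:ℝ) < (q * k + m : ℕ) := by
      have : 0 < q * k + m := by omega
      exact_mod_cast this
    have hqpos : (0:ℝ) < q := by exact_mod_cast hq
    rw [div_le_iff₀ hnpos]
    have hnr : ((q * k + m : ℕ):ℝ) = (q:ℝ) * k + m := by push_cast; ring
    have hkr : (1:ℝ) ≤ k := by exact_mod_cast hk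
    have hmr : (m:ℝ) + 1 ≤ k := by exact_mod_cast hm
    have key : c / q + 1 / q ≤ c / q + 2 / ((q:ℝ) + 1) := by
      gcongr ?_ + ?_
      · exact le_refl _
      · have hq1 : (1:ℝ) ≤ q := by exact_mod_cast hq
        rw [div_le_div_iff₀ hqpos (by linarith)]
        linarith
    calc (k:ℝ) * c + m * 1 ≤ (c / q + 1 / q) * ((q * k + m : ℕ):ℝ) := by
          rw [hnr, ← add_div, div_mul_eq_mul_div, le_div_iff₀ hqpos]
          nlinarith [hmr, hc, hc0, hqpos]
      _ ≤ (c / q + 2 / ((q:ℝ) + 1)) * ((q * k + m : ℕ):ℝ) := by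
          apply mul_le_mul_of_nonneg_right key (le_of_lt hnpos)

end stretch

lemma Icc_one_eq_Ioc (n : ℕ) : Finset.Icc 1 n = Finset.Ioc 0 n := by
  rw [← Finset.Icc_add_one_left_eq_Ioc]; rfl

/-- The error term. -/
noncomputable def Efun (γ M : ℝ) (T : ℕ) : ℝ :=
  γ * M * (∑ t ∈ Finset.Icc 1 T, 2 / (t : ℝ)) / T

section payoff
variable {A : Type*} [DecidableEq A]

lemma avgU_stretch (u : A → ℝ) (γ M : ℝ) (hu : ∀ x, 0 ≤ u x)
    (huM : ∀ x, u x ≤ M) (hγ0 : 0 < γ) (a : ℕ → A) {T k : ℕ} (hT : 0 < T) (hk : 0 < k) :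
    avgU u γ a T - Efun γ M T ≤ avgU u γ (fun s => a ((s + k - 1) / k)) (k * T) := by
  set b : ℕ → A := fun s => a ((s + k - 1) / k) with hb
  set G : ℕ → ℝ := fun t => (1 - γ * freq a (a t) (t - 1)) * u (a t) - γ * M * (2 / (t : ℝ))
    with hG
  have claim : ∀ s ∈ Finset.Ioc 0 (k * T),
      G ((s + k - 1) / k) ≤ (1 - γ * freq b (b s) (s - 1)) * u (b s) := by
    intro s hs
    have hs1 : 1 ≤ s := (Finset.mem_Ioc.mp hs).1
    have ht : (s + k - 1) / k = (s - 1) / k + 1 := by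
      rw [show s + k - 1 = (s - 1) + k from by omega, Nat.add_div_right _ hk]
    have hbs : b s = a ((s - 1) / k + 1) := by rw [hb]; simp only; rw [ht]
    rw [ht, hbs]
    have hfr : freq b (a ((s - 1) / k + 1)) (s - 1)
        ≤ freq a (a ((s - 1) / k + 1)) ((s - 1) / k) + 2 / (((s - 1) / k : ℕ) + 1 : ℝ) := by
      have := freq_stretch_le a hk (s - 1)
      rw [← hb] at this
      exact this
    have ht1 : (s - 1) / k + 1 - 1 = (s - 1) / k := Nat.add_sub_cancel _ _
    rw [hG]
    simp only
    rw [ht1]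
    have htr : (((s - 1) / k + 1 : ℕ) : ℝ) = (((s - 1) / k : ℕ) : ℝ) + 1 := by push_cast; ring
    rw [htr]
    set d := 2 / ((((s - 1) / k : ℕ) : ℝ) + 1) with hd
    have hd0 : 0 ≤ d := by positivity
    have hfa0 : 0 ≤ freq a (a ((s - 1) / k + 1)) ((s - 1) / k) := freq_nonneg _ _ _
    have hux := hu (a ((s - 1) / k + 1))
    have huxM := huM (a ((s - 1) / k + 1))
    nlinarith [mul_le_mul_of_nonneg_right hfr hux,
      mul_le_mul_of_nonneg_left huxM hd0, hγ0.le,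
      mul_le_mul_of_nonneg_left (mul_le_mul_of_nonneg_left huxM hd0) hγ0.le]
  have hsum : ∑ s ∈ Finset.Ioc 0 (k * T), G ((s + k - 1) / k)
      ≤ ∑ s ∈ Finset.Ioc 0 (k * T), (1 - γ * freq b (b s) (s - 1)) * u (b s) :=
    Finset.sum_le_sum claim
  have e1 : ∑ s ∈ Finset.Ioc 0 (k * T), G ((s + k - 1) / k)
      = k * ∑ t ∈ Finset.Ioc 0 T, G t := by
    rw [mul_comm k T]; exact sum_blocks G hk T
  have lower : (k : ℝ) * ∑ t ∈ Finset.Ioc 0 T, G t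
      ≤ ∑ s ∈ Finset.Ioc 0 (k * T), (1 - γ * freq b (b s) (s - 1)) * u (b s) := by
    rw [← e1]; exact hsum
  have hGsum : ∑ t ∈ Finset.Ioc 0 T, G t
      = (∑ t ∈ Finset.Ioc 0 T, (1 - γ * freq a (a t) (t - 1)) * u (a t))
        - γ * M * ∑ t ∈ Finset.Ioc 0 T, (2 / (t : ℝ)) := by
    simp only [hG]
    rw [Finset.sum_sub_distrib, Finset.mul_sum]
  have hTpos : (0 : ℝ) < T := by exact_mod_cast hT
  have hkpos : (0 : ℝ) < k := by exact_mod_cast hk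
  have hkTpos : (0 : ℝ) < ((k * T : ℕ) : ℝ) := by
    have : 0 < k * T := Nat.mul_pos hk hT
    exact_mod_cast this
  calc avgU u γ a T - Efun γ M T
      = (∑ t ∈ Finset.Ioc 0 T, G t) / T := by
        unfold avgU Efun
        rw [Icc_one_eq_Ioc, hGsum]
        ring
    _ = ((k : ℝ) * ∑ t ∈ Finset.Ioc 0 T, G t) / ((k * T : ℕ) : ℝ) := by
        push_cast
        rw [mul_div_mul_left _ _ (ne_of_gt hkpos)]
    _ ≤ (∑ s ∈ Finset.Ioc 0 (k * T), (1 - γ * freq b (b s) (s - 1)) * u (b s))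
          / ((k * T : ℕ) : ℝ) := by
        exact (div_le_div_iff_of_pos_right hkTpos).mpr lower
    _ = avgU u γ b (k * T) := by
        unfold avgU
        rw [Icc_one_eq_Ioc]

lemma term_nonneg (u : A → ℝ) (γ : ℝ) (hu : ∀ x, 0 ≤ u x) (hγ0 : 0 < γ) (hγ1 : γ ≤ 1)
    (a : ℕ → A) (t : ℕ) : 0 ≤ (1 - γ * freq a (a t) (t - 1)) * u (a t) := by
  apply mul_nonneg _ (hu _)
  have h1 := freq_le_one a (a t) (t - 1)
  have h0 := freq_nonneg a (a t) (t - 1)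
  nlinarith

lemma term_le (u : A → ℝ) (γ M : ℝ) (hu : ∀ x, 0 ≤ u x) (huM : ∀ x, u x ≤ M)
    (hγ0 : 0 < γ) (hγ1 : γ ≤ 1) (a : ℕ → A) (t : ℕ) :
    (1 - γ * freq a (a t) (t - 1)) * u (a t) ≤ M := by
  have h1 := freq_le_one a (a t) (t - 1)
  have h0 := freq_nonneg a (a t) (t - 1)
  have hux := hu (a t)
  have huxM := huM (a t)
  calc (1 - γ * freq a (a t) (t - 1)) * u (a t) ≤ 1 * u (a t) :=
        mul_le_mul_of_nonneg_right (by nlinarith) hux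
    _ = u (a t) := one_mul _
    _ ≤ M := huxM

lemma avgU_nonneg (u : A → ℝ) (γ : ℝ) (hu : ∀ x, 0 ≤ u x) (hγ0 : 0 < γ) (hγ1 : γ ≤ 1)
    (a : ℕ → A) (T : ℕ) : 0 ≤ avgU u γ a T := by
  unfold avgU
  apply div_nonneg _ (Nat.cast_nonneg T)
  exact Finset.sum_nonneg fun t _ => term_nonneg u γ hu hγ0 hγ1 a t

lemma avgU_le (u : A → ℝ) (γ M : ℝ) (hu : ∀ x, 0 ≤ u x) (huM : ∀ x, u x ≤ M)
    (hγ0 : 0 < γ) (hγ1 : γ ≤ 1) (hM : 0 ≤ M) (a : ℕ → A) (T : ℕ) :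
    avgU u γ a T ≤ M := by
  unfold avgU
  rcases Nat.eq_zero_or_pos T with hT | hT
  · subst hT; simp [hM]
  · have hTpos : (0 : ℝ) < T := by exact_mod_cast hT
    rw [div_le_iff₀ hTpos]
    calc ∑ t ∈ Finset.Icc 1 T, (1 - γ * freq a (a t) (t - 1)) * u (a t)
        ≤ ∑ t ∈ Finset.Icc 1 T, M :=
          Finset.sum_le_sum fun t _ => term_le u γ M hu huM hγ0 hγ1 a t
      _ = M * (T:ℝ) := by simp [Finset.sum_const, Nat.card_Icc, nsmul_eq_mul, mul_comm]

lemma vT_bddAbove [Nonempty A] (u : A → ℝ) (γ M : ℝ) (hu : ∀ x, 0 ≤ u x)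
    (huM : ∀ x, u x ≤ M) (hγ0 : 0 < γ) (hγ1 : γ ≤ 1) (hM : 0 ≤ M) (T : ℕ) :
    BddAbove (Set.range fun a : ℕ → A => avgU u γ a T) := by
  refine ⟨M, ?_⟩
  rintro x ⟨a, rfl⟩
  exact avgU_le u γ M hu huM hγ0 hγ1 hM a T

lemma vT_nonneg [Nonempty A] (u : A → ℝ) (γ M : ℝ) (hu : ∀ x, 0 ≤ u x)
    (huM : ∀ x, u x ≤ M) (hγ0 : 0 < γ) (hγ1 : γ ≤ 1) (hM : 0 ≤ M) (T : ℕ) :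
    0 ≤ vT u γ T := by
  have := le_ciSup (vT_bddAbove u γ M hu huM hγ0 hγ1 hM T)
    (fun _ => Classical.arbitrary A)
  exact le_trans (avgU_nonneg u γ hu hγ0 hγ1 _ T) this

lemma vT_le [Nonempty A] (u : A → ℝ) (γ M : ℝ) (hu : ∀ x, 0 ≤ u x)
    (huM : ∀ x, u x ≤ M) (hγ0 : 0 < γ) (hγ1 : γ ≤ 1) (hM : 0 ≤ M) (T : ℕ) :
    vT u γ T ≤ M :=
  ciSup_le fun a => avgU_le u γ M hu huM hγ0 hγ1 hM a T

end payoff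

section key
variable {A : Type*} [DecidableEq A] [Nonempty A]

lemma vT_key (u : A → ℝ) (γ M : ℝ) (hu : ∀ x, 0 ≤ u x) (huM : ∀ x, u x ≤ M)
    (hγ0 : 0 < γ) (hγ1 : γ ≤ 1) (hM : 0 ≤ M) {T N : ℕ} (hT : 1 ≤ T) (hTN : T ≤ N) :
    vT u γ T - Efun γ M T - M * T / N ≤ vT u γ N := by
  have hNpos : 0 < N := lt_of_lt_of_le hT hTN
  have hNr : (0:ℝ) < N := by exact_mod_cast hNpos
  refine le_of_forall_pos_le_add ?_
  intro ε hε
  set k := N / T with hkdef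
  have hk : 1 ≤ k := (Nat.one_le_div_iff hT).mpr hTN
  have hr : N % T < T := Nat.mod_lt _ hT
  have hN : k * T + N % T = N := by rw [mul_comm]; exact Nat.div_add_mod N T
  have hkTN : k * T ≤ N := by omega
  obtain ⟨a, ha⟩ : ∃ a : ℕ → A, vT u γ T - ε < avgU u γ a T := by
    have h1 : vT u γ T - ε < vT u γ T := by linarith
    exact exists_lt_of_lt_ciSup h1
  set b : ℕ → A := fun s => a ((s + k - 1) / k) with hb
  have hstretch : avgU u γ a T - Efun γ M T ≤ avgU u γ b (k * T) :=
    avgU_stretch u γ M hu huM hγ0 a hT hk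
  set X := avgU u γ b (k * T) with hX
  have hX0 : 0 ≤ X := avgU_nonneg u γ hu hγ0 hγ1 b (k * T)
  have hXM : X ≤ M := avgU_le u γ M hu huM hγ0 hγ1 hM b (k * T)
  have hkT : (0:ℝ) < ((k * T : ℕ) : ℝ) := by
    have : 0 < k * T := Nat.mul_pos hk hT
    exact_mod_cast this
  have hXmul : X * ((k * T : ℕ) : ℝ)
      = ∑ t ∈ Finset.Ioc 0 (k * T), (1 - γ * freq b (b t) (t - 1)) * u (b t) := by
    rw [hX]
    unfold avgU
    rw [Icc_one_eq_Ioc, div_mul_cancel₀ _ (ne_of_gt hkT)]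
  have htrunc : X * ((k * T : ℕ) : ℝ) / N ≤ avgU u γ b N := by
    unfold avgU
    rw [Icc_one_eq_Ioc, hXmul]
    apply (div_le_div_iff_of_pos_right hNr).mpr
    rw [← Finset.sum_Ioc_consecutive _ (Nat.zero_le (k * T)) hkTN]
    have tail : 0 ≤ ∑ t ∈ Finset.Ioc (k * T) N, (1 - γ * freq b (b t) (t - 1)) * u (b t) :=
      Finset.sum_nonneg fun t _ => term_nonneg u γ hu hγ0 hγ1 b t
    linarith
  have hvN : avgU u γ b N ≤ vT u γ N :=
    le_ciSup (vT_bddAbove u γ M hu huM hγ0 hγ1 hM N) b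
  have hcast : ((k * T : ℕ) : ℝ) + ((N % T : ℕ) : ℝ) = (N : ℝ) := by exact_mod_cast hN
  have hrr : ((N % T : ℕ) : ℝ) ≤ (T : ℝ) := by exact_mod_cast hr.le
  have hr0 : (0 : ℝ) ≤ ((N % T : ℕ) : ℝ) := Nat.cast_nonneg _
  have harith : X - M * T / N ≤ X * ((k * T : ℕ) : ℝ) / N := by
    have h1 : X - M * T / N = (X * N - M * T) / N := by field_simp
    rw [h1]
    apply (div_le_div_iff_of_pos_right hNr).mpr
    have hXr : X * ((N % T : ℕ) : ℝ) ≤ M * T := by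
      apply mul_le_mul hXM hrr hr0 hM
    nlinarith [hcast]
  have hchain : vT u γ T - Efun γ M T - M * T / N ≤ vT u γ N + ε := by linarith
  exact hchain
end key

lemma Efun_tendsto (γ M : ℝ) : Tendsto (fun T => Efun γ M T) atTop (nhds 0) := by
  have h0 : Tendsto (fun i : ℕ => 2 / ((i : ℝ) + 1)) atTop (nhds 0) := by
    have h2 := tendsto_one_div_add_atTop_nhds_zero_nat.const_mul (2 : ℝ)
    rw [mul_zero] at h2
    refine h2.congr fun n => ?_
    rw [mul_one_div]
  have hces := h0.cesaro
  have key : ∀ T : ℕ, Efun γ M T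
      = γ * M * ((T : ℝ)⁻¹ * ∑ i ∈ Finset.range T, 2 / ((i : ℝ) + 1)) := by
    intro T
    unfold Efun
    rw [show Finset.Icc 1 T = Finset.Ico 1 (T + 1) from by rw [Finset.Ico_add_one_right_eq_Icc],
        Finset.sum_Ico_eq_sum_range]
    simp only [Nat.add_sub_cancel]
    have : ∀ i ∈ Finset.range T, 2 / ((1 + i : ℕ) : ℝ) = 2 / ((i : ℝ) + 1) := by
      intro i _
      push_cast
      ring_nf
    rw [Finset.sum_congr rfl this]
    ring
  have h := hces.const_mul (γ * M)
  rw [mul_zero] at h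
  exact h.congr fun T => (key T).symm

theorem stmt12 {A : Type*} [Fintype A] [DecidableEq A] [Nonempty A]
    (u : A → ℝ) (hu : ∀ x, 0 ≤ u x) (γ : ℝ) (hγ : 0 < γ ∧ γ ≤ 1) :
    ∃ L : ℝ, Tendsto (fun T => vT (A := A) u γ T) atTop (nhds L) := by
  obtain ⟨hγ0, hγ1⟩ := hγ
  set M : ℝ := Finset.univ.sup' Finset.univ_nonempty u with hMdef
  have huM : ∀ x, u x ≤ M := fun x => Finset.le_sup' u (Finset.mem_univ x)
  have hM : 0 ≤ M := le_trans (hu (Classical.arbitrary A)) (huM _)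
  have hbddU : IsBoundedUnder (· ≤ ·) atTop (fun T => vT u γ T) :=
    isBoundedUnder_of ⟨M, fun T => vT_le u γ M hu huM hγ0 hγ1 hM T⟩
  have hbddL : IsBoundedUnder (· ≥ ·) atTop (fun T => vT u γ T) :=
    isBoundedUnder_of ⟨0, fun T => vT_nonneg u γ M hu huM hγ0 hγ1 hM T⟩
  set L := limsup (fun T => vT u γ T) atTop with hL
  refine ⟨L, tendsto_of_liminf_eq_limsup ?_ rfl hbddU hbddL⟩
  apply le_antisymm (liminf_le_limsup hbddU hbddL)
  have main : ∀ ε > (0:ℝ), L - ε ≤ liminf (fun T => vT u γ T) atTop := by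
    intro ε hε
    have hfreq : ∃ᶠ T in atTop, L - ε/3 < vT u γ T :=
      frequently_lt_of_lt_limsup hbddL.isCoboundedUnder_le (by linarith [hL] : L - ε/3 < L)
    have hev1 : ∀ᶠ T in atTop, Efun γ M T < ε/3 :=
      (Efun_tendsto γ M).eventually_lt_const (by linarith)
    obtain ⟨T0, hT0v, hT0E, hT01⟩ :
        ∃ T0, (L - ε/3 < vT u γ T0) ∧ Efun γ M T0 < ε/3 ∧ 1 ≤ T0 := by
      obtain ⟨T0, h1, h2, h3⟩ :=
        (hfreq.and_eventually (hev1.and (eventually_ge_atTop 1))).exists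
      exact ⟨T0, h1, h2, h3⟩
    have hev2 : ∀ᶠ N : ℕ in atTop, M * T0 / (N : ℝ) < ε/3 :=
      (tendsto_const_div_atTop_nhds_zero_nat (M * T0)).eventually_lt_const (by linarith)
    have hev3 : ∀ᶠ N in atTop, L - ε ≤ vT u γ N := by
      filter_upwards [hev2, eventually_ge_atTop T0] with N h2 hN
      have := vT_key u γ M hu huM hγ0 hγ1 hM hT01 hN
      linarith
    exact le_liminf_of_le hbddU.isCoboundedUnder_ge hev3
  refine le_of_forall_pos_le_add fun ε hε => ?_
  linarith [main ε hε]
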